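/- A cycle C_n (n ≥ 3) is a hypo-efficient-domination graph if and only if n is not divisible by 3 and n ≥ 4 (i.e., n ≡ 1 or 2 (mod 3), n ≥ 4). -/

import Mathlib

open SimpleGraph

variable {V : Type*}

/-- `D` is a dominating set of `G`. -/
def IsDomSet (G : SimpleGraph V) (D : Finset V) : Prop :=
  ∀ v : V, ∃ u ∈ D, u = v ∨ G.Adj u v

/-- The domination number `γ(G)`. -/
noncomputable def domNum (G : SimpleGraph V) : ℕ :=
  sInf {n | ∃ D : Finset V, IsDomSet G D ∧ D.card = n}

/-- `D` is a minimum dominating set (γ-set) of `G`. -/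
def IsGammaSet (G : SimpleGraph V) (D : Finset V) : Prop :=
  IsDomSet G D ∧ D.card = domNum G

/-- The graph `G - x` obtained by deleting the vertex `x`. -/
def vdel (G : SimpleGraph V) (x : V) : SimpleGraph {u : V // u ≠ x} :=
  SimpleGraph.comap Subtype.val G

/-- `G` is a hypo-unique-domination graph: `G` has at least two γ-sets,
but `G - x` has a unique γ-set for every vertex `x`. -/
def HypoUD (G : SimpleGraph V) : Prop :=
  (∃ D₁ D₂ : Finset V, IsGammaSet G D₁ ∧ IsGammaSet G D₂ ∧ D₁ ≠ D₂) ∧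
  ∀ x : V, ∃! D : Finset {u : V // u ≠ x}, IsGammaSet (vdel G x) D

/-- `D` is an efficient dominating set of `G`: every vertex is dominated exactly once. -/
def IsEDS (G : SimpleGraph V) (D : Finset V) : Prop :=
  ∀ v : V, ∃! u : V, u ∈ D ∧ (u = v ∨ G.Adj u v)

/-- `G` is a hypo-efficient-domination graph: `G` has no EDS,
but `G - x` has an EDS for every vertex `x`. -/
def HypoED (G : SimpleGraph V) : Prop :=
  (¬ ∃ D : Finset V, IsEDS G D) ∧
  ∀ x : V, ∃ D : Finset {u : V // u ≠ x}, IsEDS (vdel G x) D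

private lemma mod2 (t n : ℕ) (h : t < 2*n) : t % n = if t < n then t else t - n := by
  split_ifs with h'
  · exact Nat.mod_eq_of_lt h'
  · rw [Nat.mod_eq_sub_mod (le_of_not_gt h')]
    exact Nat.mod_eq_of_lt (by omega)

private lemma sub_val' (n : ℕ) [NeZero n] (a b : Fin n) : (a - b).val = (n - b.val + a.val) % n := by
  rw [Fin.sub_def]

private lemma adj_val {n : ℕ} (hn : 3 ≤ n) (a b : Fin n) :
    (cycleGraph n).Adj a b ↔ (a.val = b.val + 1 ∨ b.val = a.val + 1 ∨
      (a.val = 0 ∧ b.val = n-1) ∨ (b.val = 0 ∧ a.val = n-1)) := by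
  haveI : NeZero n := ⟨by omega⟩
  have ha := a.isLt; have hb := b.isLt
  rw [cycleGraph_adj', sub_val', sub_val',
    mod2 _ n (by omega), mod2 _ n (by omega)]
  split_ifs <;> omega

private lemma eds_of_dvd (n : ℕ) (hn : 3 ≤ n) (h3 : 3 ∣ n) :
    ∃ D : Finset (Fin n), IsEDS (cycleGraph n) D := by
  haveI : NeZero n := ⟨by omega⟩
  refine ⟨Finset.univ.filter (fun v => v.val % 3 = 0), fun v => ?_⟩
  have hv := v.isLt
  refine ⟨⟨if v.val % 3 = 1 then v.val - 1 else if v.val % 3 = 2 then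
      (if v.val + 1 = n then 0 else v.val + 1) else v.val, by split_ifs <;> omega⟩, ⟨?_, ?_⟩, ?_⟩
  · simp only [Finset.mem_filter, Finset.mem_univ, true_and]
    split_ifs <;> omega
  · rw [Fin.ext_iff, adj_val hn]
    simp only
    split_ifs <;> omega
  · rintro y ⟨hy1, hy2⟩
    simp only [Finset.mem_filter, Finset.mem_univ, true_and] at hy1
    rw [Fin.ext_iff] at hy2 ⊢
    rw [adj_val hn] at hy2
    have hyv := y.isLt
    simp only
    split_ifs <;> omega

private lemma dvd_of_eds (n : ℕ) (hn : 3 ≤ n) (D : Finset (Fin n))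
    (hD : IsEDS (cycleGraph n) D) : 3 ∣ n := by
  haveI : NeZero n := ⟨by omega⟩
  classical
  choose f hf using hD
  have hmem : ∀ v : Fin n, f v ∈ D := fun v => (hf v).1.1
  have key : (Finset.univ : Finset (Fin n)).card
      = ∑ u ∈ D, (Finset.univ.filter (fun v => f v = u)).card :=
    Finset.card_eq_sum_card_fiberwise (fun v _ => hmem v)
  have fib : ∀ u ∈ D, (Finset.univ.filter (fun v => f v = u)).card = 3 := by
    intro u hu
    have hfib : (Finset.univ.filter (fun v => f v = u)) = ({u-1, u, u+1} : Finset (Fin n)) := by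
      ext v
      simp only [Finset.mem_filter, Finset.mem_univ, true_and, Finset.mem_insert,
        Finset.mem_singleton]
      have hu1 := u.isLt; have hv1 := v.isLt
      have hadd := sub_val' n u 1
      have hadd2 : (u+1).val = (u.val + 1) % n := by
        rw [Fin.add_def]; simp [Fin.val_one', Nat.mod_eq_of_lt (show 1 < n by omega)]
      have h1 : (1 : Fin n).val = 1 := by rw [Fin.val_one']; exact Nat.mod_eq_of_lt (by omega)
      constructor
      · intro hfv
        have h := (hf v).1.2
        rw [hfv] at h
        rcases h with h | h
        · right; left; exact h.symm
        · rw [adj_val hn] at h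
          rw [Fin.ext_iff, Fin.ext_iff, Fin.ext_iff, hadd, hadd2, h1,
            mod2 _ n (by omega), mod2 _ n (by omega)]
          split_ifs <;> omega
      · intro hv
        refine ((hf v).2 u ⟨hu, ?_⟩).symm
        rcases hv with hv | hv | hv
        · right; rw [adj_val hn, hv, hadd, h1, mod2 _ n (by omega)]
          split_ifs <;> omega
        · left; exact hv.symm
        · right; rw [adj_val hn, hv, hadd2, mod2 _ n (by omega)]
          split_ifs <;> omega
    rw [hfib]
    have hu1 := u.isLt
    have hadd := sub_val' n u 1
    have hadd2 : (u+1).val = (u.val + 1) % n := by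
        rw [Fin.add_def]; simp [Fin.val_one', Nat.mod_eq_of_lt (show 1 < n by omega)]
    have h1 : (1 : Fin n).val = 1 := by rw [Fin.val_one']; exact Nat.mod_eq_of_lt (by omega)
    rw [Finset.card_insert_of_notMem, Finset.card_insert_of_notMem, Finset.card_singleton]
    · simp only [Finset.mem_singleton]
      rw [Fin.ext_iff, hadd2, mod2 _ n (by omega)]
      split_ifs <;> omega
    · simp only [Finset.mem_insert, Finset.mem_singleton, not_or]
      constructor <;> rw [Fin.ext_iff]
      · rw [hadd, h1, mod2 _ n (by omega)]; split_ifs <;> omega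
      · rw [hadd, hadd2, h1, mod2 _ n (by omega), mod2 _ n (by omega)]
        split_ifs <;> omega
  have : n = 3 * D.card := by
    have := key
    rw [Finset.card_univ, Fintype.card_fin, Finset.sum_congr rfl fib, Finset.sum_const,
      smul_eq_mul] at this
    omega
  exact ⟨D.card, this⟩

private lemma nat_dom (m j : ℕ) (hm : 2 ≤ m) (hj : 1 ≤ j) (hj2 : j ≤ m) :
    ∃! s, (1 ≤ s ∧ s ≤ m ∧ s % 3 = (if m % 3 = 0 then 2 else 1)) ∧
      (s = j ∨ s + 1 = j ∨ j + 1 = s) := by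
  refine ⟨if j % 3 = (if m % 3 = 0 then 2 else 1) then j
    else if (j+1) % 3 = (if m % 3 = 0 then 2 else 1) then j+1 else j-1, ⟨?_, ?_⟩, ?_⟩
  · split_ifs <;> omega
  · split_ifs <;> omega
  · rintro y ⟨⟨hy1, hy2, hy3⟩, hy4⟩
    split_ifs at hy3 ⊢ <;> omega

open scoped Fin.CommRing in
private lemma adj_coord {n : ℕ} (hn : 3 ≤ n) [NeZero n] (x a b : Fin n)
    (ha1 : 1 ≤ (a-x).val) (hb1 : 1 ≤ (b-x).val) :
    (cycleGraph n).Adj a b ↔ ((a-x).val = (b-x).val + 1 ∨ (b-x).val = (a-x).val + 1) := by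
  have h1 : a - b = (a - x) - (b - x) := by ring
  have h2 : b - a = (b - x) - (a - x) := by ring
  rw [cycleGraph_adj', h1, h2]
  set A := a - x with hA
  set B := b - x with hB
  have ha := A.isLt; have hb := B.isLt
  rw [sub_val' n A B, sub_val' n B A, mod2 _ n (by omega), mod2 _ n (by omega)]
  split_ifs <;> omega

open scoped Fin.CommRing in
private lemma vdel_eds (n : ℕ) (hn : 3 ≤ n) (x : Fin n) :
    ∃ D : Finset {u : Fin n // u ≠ x}, IsEDS (vdel (cycleGraph n) x) D := by
  haveI : NeZero n := ⟨by omega⟩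
  classical
  set r : ℕ := if (n-1) % 3 = 0 then 2 else 1 with hr
  refine ⟨Finset.univ.filter (fun u : {v : Fin n // v ≠ x} => ((u : Fin n) - x).val % 3 = r), ?_⟩
  intro v
  have coordb : ∀ u : {v : Fin n // v ≠ x}, 1 ≤ ((u : Fin n) - x).val ∧ ((u : Fin n) - x).val ≤ n - 1 := by
    intro u
    have h0 : (u : Fin n) - x ≠ 0 := sub_ne_zero.mpr u.prop
    have h1 : ((u : Fin n) - x).val ≠ 0 := fun h => h0 (Fin.ext (by simp [h]))
    have h2 := ((u : Fin n) - x).isLt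
    omega
  obtain ⟨hj1, hj2⟩ := coordb v
  obtain ⟨s, ⟨⟨hs1, hs2, hs3⟩, hsdom⟩, hsuniq⟩ :=
    nat_dom (n-1) ((v : Fin n) - x).val (by omega) hj1 hj2
  have hsval : ((s : Fin n) : ℕ) = s := by
    rw [Fin.val_natCast]; exact Nat.mod_eq_of_lt (by omega)
  have hne : x + (s : Fin n) ≠ x := by
    intro h
    have h0 : (s : Fin n) = 0 := by
      have h' : x + (s : Fin n) = x + 0 := by rw [add_zero]; exact h
      exact add_left_cancel h'
    rw [Fin.ext_iff, hsval] at h0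
    simp at h0; omega
  have hcu : ((x + (s : Fin n) : Fin n) - x).val = s := by
    rw [add_sub_cancel_left, hsval]
  refine ⟨⟨x + (s : Fin n), hne⟩, ⟨?_, ?_⟩, ?_⟩
  · simp only [Finset.mem_filter, Finset.mem_univ, true_and]
    rw [hcu]; exact hs3
  · rcases hsdom with h | h | h
    · left
      have : (s : Fin n) = (v : Fin n) - x := by
        rw [h, Fin.cast_val_eq_self]
      apply Subtype.ext
      simp only
      rw [this, add_comm, sub_add_cancel]
    · right
      show (cycleGraph n).Adj (x + (s : Fin n)) (v : Fin n)
      rw [adj_coord hn x _ _ (by omega) hj1, hcu]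
      omega
    · right
      show (cycleGraph n).Adj (x + (s : Fin n)) (v : Fin n)
      rw [adj_coord hn x _ _ (by omega) hj1, hcu]
      omega
  · rintro y ⟨hy1, hy2⟩
    simp only [Finset.mem_filter, Finset.mem_univ, true_and] at hy1
    obtain ⟨hk1, hk2⟩ := coordb y
    have hrel : ((y : Fin n) - x).val = ((v : Fin n) - x).val ∨
        ((y : Fin n) - x).val + 1 = ((v : Fin n) - x).val ∨
        ((v : Fin n) - x).val + 1 = ((y : Fin n) - x).val := by
      rcases hy2 with h | h
      · left; rw [h]
      · have := (adj_coord hn x (y : Fin n) (v : Fin n) hk1 hj1).mp h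
        omega
    have hys : ((y : Fin n) - x).val = s := hsuniq _ ⟨⟨hk1, hk2, hy1⟩, hrel⟩
    have : (y : Fin n) - x = ((x + (s : Fin n) : Fin n)) - x := by
      rw [hcu.symm] at hys
      exact Fin.ext (by rw [hys, hcu])
    apply Subtype.ext
    exact sub_left_inj.mp this


theorem hypoED_cycle (n : ℕ) (hn : 3 ≤ n) :
    HypoED (cycleGraph n) ↔ ¬ (3 ∣ n) ∧ 4 ≤ n := by
  constructor
  · rintro ⟨h1, _⟩
    have hnd : ¬ (3 ∣ n) := fun hd => h1 (eds_of_dvd n hn hd)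
    exact ⟨hnd, by omega⟩
  · rintro ⟨h3, _⟩
    exact ⟨fun ⟨D, hD⟩ => h3 (dvd_of_eds n hn D hD), fun x => vdel_eds n hn x⟩
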